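/- Let D be a DNNF over V and N ⊆ V. The formula obtained from D by replacing every literal over a variable in N with true is logically equivalent to the existential quantification of D over N, restricted to variables V \ N: an assignment over V \ N satisfies the replaced formula iff it has an extension to V satisfying D. -/

import Mathlib

abbrev Var := ℕ

abbrev Assg (V : Finset Var) := {x // x ∈ V} → Bool

def extAssg (V : Finset Var) (g : Assg V) : Var → Bool :=
  fun x => if h : x ∈ V then g ⟨x, h⟩ else false

def dependsOn (F : (Var → Bool) → Bool) (V : Finset Var) : Prop :=
  ∀ σ τ : Var → Bool, (∀ x ∈ V, σ x = τ x) → F σ = F τ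

def models (F : (Var → Bool) → Bool) (V : Finset Var) : Finset (Assg V) :=
  Finset.univ.filter (fun g => F (extAssg V g) = true)

def ct (F : (Var → Bool) → Bool) (V : Finset Var) : ℕ := (models F V).card

def restrictAssg {V P : Finset Var} (h : P ⊆ V) (g : Assg V) : Assg P :=
  fun x => g ⟨x.1, h x.2⟩

def projCt (F : (Var → Bool) → Bool) (V P : Finset Var) (h : P ⊆ V) : ℕ :=
  ((models F V).image (restrictAssg h)).card

inductive NNF where
  | tru : NNF
  | lit : Var → Bool → NNF
  | and : NNF → NNF → NNF
  | or : NNF → NNF → NNF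

def NNF.vars : NNF → Finset Var
  | .tru => ∅
  | .lit v _ => {v}
  | .and a b => a.vars ∪ b.vars
  | .or a b => a.vars ∪ b.vars

def NNF.sat : NNF → (Var → Bool) → Bool
  | .tru, _ => true
  | .lit v b, σ => σ v == b
  | .and a b, σ => a.sat σ && b.sat σ
  | .or a b, σ => a.sat σ || b.sat σ

def NNF.decomposable : NNF → Prop
  | .tru => True
  | .lit _ _ => True
  | .and a b => a.decomposable ∧ b.decomposable ∧ Disjoint a.vars b.vars
  | .or a b => a.decomposable ∧ b.decomposable

def NNF.dDNNF : NNF → Prop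
  | .tru => True
  | .lit _ _ => True
  | .and a b => a.dDNNF ∧ b.dDNNF ∧ Disjoint a.vars b.vars
  | .or a b => a.dDNNF ∧ b.dDNNF ∧ ∀ σ, ¬(a.sat σ = true ∧ b.sat σ = true)

def NNF.wval : NNF → ℚ
  | .tru => 1
  | .lit _ _ => 1/2
  | .and a b => a.wval * b.wval
  | .or a b => a.wval + b.wval

def NNF.forget (N : Finset Var) : NNF → NNF
  | .tru => .tru
  | .lit v b => if v ∈ N then .tru else .lit v b
  | .and a b => .and (a.forget N) (b.forget N)
  | .or a b => .or (a.forget N) (b.forget N)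

def nnfCt (D : NNF) (V : Finset Var) : ℕ :=
  (Finset.univ.filter (fun g : Assg V => D.sat (extAssg V g) = true)).card


lemma sat_congr (D : NNF) (σ τ : Var → Bool) (h : ∀ x ∈ D.vars, σ x = τ x) :
    D.sat σ = D.sat τ := by
  induction D with
  | tru => rfl
  | lit v b => simp [NNF.sat, h v (by simp [NNF.vars])]
  | and a b iha ihb =>
      simp only [NNF.sat]
      rw [iha (fun x hx => h x (by simp [NNF.vars, hx])),
          ihb (fun x hx => h x (by simp [NNF.vars, hx]))]
  | or a b iha ihb =>
      simp only [NNF.sat]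
      rw [iha (fun x hx => h x (by simp [NNF.vars, hx])),
          ihb (fun x hx => h x (by simp [NNF.vars, hx]))]

theorem stmt14 (D : NNF) (N : Finset Var) (hD : D.decomposable) (σ : Var → Bool) :
    (D.forget N).sat σ = true ↔
      ∃ τ : Var → Bool, (∀ x, x ∉ N → τ x = σ x) ∧ D.sat τ = true := by
  induction D generalizing σ with
  | tru =>
      constructor
      · intro _; exact ⟨σ, fun _ _ => rfl, rfl⟩
      · intro _; rfl
  | lit v b =>
      by_cases hv : v ∈ N
      · simp only [NNF.forget, hv, if_pos, NNF.sat]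
        constructor
        · intro _
          refine ⟨Function.update σ v b, ?_, ?_⟩
          · intro x hx
            exact Function.update_of_ne (fun h => hx (by rw [h]; exact hv)) _ _
          · simp [NNF.sat]
        · intro _; trivial
      · simp only [NNF.forget, hv, if_neg, if_false, NNF.sat]
        constructor
        · intro h; exact ⟨σ, fun _ _ => rfl, h⟩
        · rintro ⟨τ, hτ, hs⟩
          rw [← hτ v hv]; exact hs
  | and a b iha ihb =>
      obtain ⟨ha, hb, hdisj⟩ := hD
      simp only [NNF.forget, NNF.sat, Bool.and_eq_true]
      rw [iha ha, ihb hb]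
      constructor
      · rintro ⟨⟨τ₁, h1, s1⟩, ⟨τ₂, h2, s2⟩⟩
        refine ⟨fun x => if x ∈ a.vars then τ₁ x else if x ∈ b.vars then τ₂ x else σ x,
          ?_, ?_⟩
        · intro x hx
          by_cases h : x ∈ a.vars
          · simp only [h, if_true]; exact h1 x hx
          · by_cases h' : x ∈ b.vars <;> simp only [h, h', if_true, if_false]
            · exact h2 x hx
        · constructor
          · rw [← sat_congr a τ₁]
            · exact s1
            · intro x hx; simp only [hx, if_true]
          · rw [← sat_congr b τ₂]
            · exact s2
            · intro x hx
              have hna : x ∉ a.vars := fun h => (Finset.disjoint_left.mp hdisj) h hx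
              simp only [hna, hx, if_true, if_false]
      · rintro ⟨τ, hτ, hs⟩
        exact ⟨⟨τ, hτ, hs.1⟩, ⟨τ, hτ, hs.2⟩⟩
  | or a b iha ihb =>
      obtain ⟨ha, hb⟩ := hD
      simp only [NNF.forget, NNF.sat, Bool.or_eq_true]
      rw [iha ha, ihb hb]
      constructor
      · rintro (⟨τ, hτ, hs⟩ | ⟨τ, hτ, hs⟩)
        · exact ⟨τ, hτ, Or.inl hs⟩
        · exact ⟨τ, hτ, Or.inr hs⟩
      · rintro ⟨τ, hτ, hs⟩
        rcases hs with hs | hs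
        · exact Or.inl ⟨τ, hτ, hs⟩
        · exact Or.inr ⟨τ, hτ, hs⟩
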